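/- Let d ≥ 2 and let σ : ℝ → ℝ be locally integrable and such that there is no polynomial P of degree at most d−2 with σ = P almost everywhere (Assumption 1). Let (x_i, y_i), i = 1,…,d, be a data set with x_i ∈ ℝ^p pairwise distinct and y_i ∈ ℝ. Then for every h ≥ d there exist a matrix W ∈ ℝ^{h×p}, vectors v ∈ ℝ^h, b ∈ ℝ^h and a scalar b' ∈ ℝ such that the shallow neural network f(x) = v^T σ(Wx − b) − b' satisfies f(x_i) = y_i for all i = 1,…,d. -/

import Mathlib

open MeasureTheory Polynomial Filter
open scoped Convolution Topology

lemma exists_antideriv (Q : Polynomial ℝ) : ∃ R : Polynomial ℝ, R.derivative = Q := by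
  induction Q using Polynomial.induction_on' with
  | add p q hp hq =>
    obtain ⟨R1, h1⟩ := hp; obtain ⟨R2, h2⟩ := hq
    exact ⟨R1 + R2, by rw [derivative_add, h1, h2]⟩
  | monomial n a =>
    refine ⟨Polynomial.monomial (n+1) (a / (n+1)), ?_⟩
    rw [Polynomial.derivative_monomial]
    simp only [Nat.add_sub_cancel, Nat.cast_add, Nat.cast_one]
    congr 1
    field_simp

lemma natDegree_le_of_iterate (n : ℕ) : ∀ P : Polynomial ℝ,
    Polynomial.derivative^[n+1] P = 0 → P.natDegree ≤ n := by
  induction n with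
  | zero =>
    intro P hP
    have hP' : Polynomial.derivative P = 0 := by simpa using hP
    exact le_of_eq (Polynomial.natDegree_eq_zero_of_derivative_eq_zero hP')
  | succ n ih =>
    intro P hP
    have h1 : Polynomial.derivative^[n+1] (Polynomial.derivative P) = 0 := by
      rw [← Function.iterate_succ_apply]; exact hP
    have h2 := ih _ h1
    by_cases h0 : P.natDegree = 0
    · omega
    · have := Polynomial.degree_derivative_eq P (Nat.pos_of_ne_zero h0)
      have h3 := Polynomial.natDegree_eq_of_degree_eq_some this
      omega

lemma poly_iteratedDeriv (k : ℕ) : ∀ p : Polynomial ℝ,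
    iteratedDeriv k (fun x : ℝ => p.eval x) = fun x => (Polynomial.derivative^[k] p).eval x := by
  induction k with
  | zero => intro p; simp [iteratedDeriv_zero]
  | succ k ih =>
    intro p
    rw [iteratedDeriv_succ']
    have : deriv (fun x : ℝ => p.eval x) = fun x => (Polynomial.derivative p).eval x :=
      funext fun x => Polynomial.deriv p
    rw [this, ih, Function.iterate_succ_apply]

lemma contDiff_iteratedDeriv {f : ℝ → ℝ} (hf : ContDiff ℝ (⊤ : ℕ∞) f) :
    ∀ n, ContDiff ℝ (⊤ : ℕ∞) (iteratedDeriv n f) := by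
  intro n
  induction n generalizing f with
  | zero => simpa [iteratedDeriv_zero] using hf
  | succ n ih =>
    rw [iteratedDeriv_succ']
    exact ih ((contDiff_infty_iff_deriv.mp hf).2)

lemma exists_poly_of_iteratedDeriv_zero (n : ℕ) : ∀ f : ℝ → ℝ, ContDiff ℝ (⊤ : ℕ∞) f →
    (∀ x, iteratedDeriv n f x = 0) → ∃ P : Polynomial ℝ, ∀ x, f x = P.eval x := by
  induction n with
  | zero =>
    intro f _ h
    exact ⟨0, fun x => by simpa [iteratedDeriv_zero] using h x⟩
  | succ n ih =>
    intro f hf h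
    obtain ⟨Q, hQ⟩ := ih (deriv f) (contDiff_infty_iff_deriv.mp hf).2
      (fun x => by rw [← iteratedDeriv_succ']; exact h x)
    obtain ⟨R, hR⟩ := exists_antideriv Q
    have hder : ∀ x : ℝ, HasDerivAt (fun y => f y - R.eval y) 0 x := by
      intro x
      have h1 : HasDerivAt f (Q.eval x) x := by
        have := ((hf.differentiable (by simp)) x).hasDerivAt
        rwa [hQ x] at this
      have h2 : HasDerivAt (fun y : ℝ => R.eval y) (Q.eval x) x := by
        simpa [hR] using R.hasDerivAt x
      have h3 := h1.sub h2
      rw [sub_self] at h3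
      exact h3
    have hconst : ∀ x : ℝ, f x - R.eval x = f 0 - R.eval 0 := by
      intro x
      exact is_const_of_deriv_eq_zero (fun y => (hder y).differentiableAt)
        (fun y => (hder y).deriv) x 0
    refine ⟨R + Polynomial.C (f 0 - R.eval 0), fun x => ?_⟩
    have := hconst x
    simp only [Polynomial.eval_add, Polynomial.eval_C]
    linarith

lemma contDiff_iteratedDeriv' {f : ℝ → ℝ} (hf : ContDiff ℝ (⊤ : ℕ∞) f) :
    ∀ n, ContDiff ℝ (⊤ : ℕ∞) (iteratedDeriv n f) := by
  intro n
  induction n generalizing f with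
  | zero => simpa [iteratedDeriv_zero] using hf
  | succ n ih =>
    rw [iteratedDeriv_succ']
    exact ih ((contDiff_infty_iff_deriv.mp hf).2)

lemma step_deriv {d : ℕ} (c tv : Fin d → ℝ) (Ψ : ℝ → ℝ) (hΨ : ContDiff ℝ (⊤ : ℕ∞) Ψ) (k m : ℕ)
    (H : ∀ w b : ℝ, ∑ i, c i * (tv i ^ k * iteratedDeriv m Ψ (w * tv i - b)) = 0) :
    (∀ w b : ℝ, ∑ i, c i * (tv i ^ k * iteratedDeriv (m+1) Ψ (w * tv i - b)) = 0) ∧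
    (∀ w b : ℝ, ∑ i, c i * (tv i ^ (k+1) * iteratedDeriv (m+1) Ψ (w * tv i - b)) = 0) := by
  have hD : ∀ (z : ℝ), HasDerivAt (iteratedDeriv m Ψ) (iteratedDeriv (m+1) Ψ z) z := by
    intro z
    have hdiff := ((contDiff_iteratedDeriv' hΨ m).differentiable
      (by simp)) z
    simpa [← iteratedDeriv_succ] using hdiff.hasDerivAt
  constructor
  · intro w b
    have hsum : HasDerivAt
        (fun b => ∑ i, c i * (tv i ^ k * iteratedDeriv m Ψ (w * tv i - b)))
        (∑ i, c i * (tv i ^ k * (iteratedDeriv (m+1) Ψ (w * tv i - b) * (-1)))) b := by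
      apply HasDerivAt.fun_sum
      intro i _
      have h1 : HasDerivAt (fun b : ℝ => w * tv i - b) (-1) b := by
        simpa using (hasDerivAt_id b).const_sub (w * tv i)
      have h3 := (hD (w * tv i - b)).comp b h1
      have h4 := HasDerivAt.const_mul (c i) (HasDerivAt.const_mul (tv i ^ k) h3)
      simpa [Function.comp, mul_assoc] using h4
    have hzero : (fun b => ∑ i, c i * (tv i ^ k * iteratedDeriv m Ψ (w * tv i - b)))
        = fun _ => 0 := funext fun b => H w b
    rw [hzero] at hsum
    have h5 := hsum.unique (hasDerivAt_const b 0)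
    have h6 : -∑ i, c i * (tv i ^ k * iteratedDeriv (m+1) Ψ (w * tv i - b)) = 0 := by
      rw [← h5, ← Finset.sum_neg_distrib]
      exact Finset.sum_congr rfl fun i _ => by ring
    linarith
  · intro w b
    have hsum : HasDerivAt
        (fun w => ∑ i, c i * (tv i ^ k * iteratedDeriv m Ψ (w * tv i - b)))
        (∑ i, c i * (tv i ^ k * (iteratedDeriv (m+1) Ψ (w * tv i - b) * tv i))) w := by
      apply HasDerivAt.fun_sum
      intro i _
      have h1 : HasDerivAt (fun w : ℝ => w * tv i - b) (tv i) w :=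
        (hasDerivAt_mul_const (tv i)).sub_const b
      have h3 := (hD (w * tv i - b)).comp w h1
      have h4 := HasDerivAt.const_mul (c i) (HasDerivAt.const_mul (tv i ^ k) h3)
      simpa [Function.comp, mul_assoc] using h4
    have hzero : (fun w => ∑ i, c i * (tv i ^ k * iteratedDeriv m Ψ (w * tv i - b)))
        = fun _ => 0 := funext fun w => H w b
    rw [hzero] at hsum
    have h5 := hsum.unique (hasDerivAt_const w 0)
    rw [← h5]
    exact Finset.sum_congr rfl fun i _ => by ring

lemma exists_ae_poly (d : ℕ) (σ : ℝ → ℝ) (hσ : LocallyIntegrable σ) (hd : 2 ≤ d)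
    (t : Fin d → ℝ) (ht : Function.Injective t)
    (c : Fin d → ℝ) (i₀ : Fin d) (hi₀ : c i₀ ≠ 0)
    (hrel : ∀ w b : ℝ, ∑ i, σ (w * t i - b) * c i = 0) :
    ∃ P : Polynomial ℝ, P.natDegree ≤ d - 2 ∧ ∀ᵐ x : ℝ, σ x = P.eval x := by
  -- bump functions
  set Φ : ℕ → ContDiffBump (0 : ℝ) := fun n =>
    ⟨(n+1 : ℝ)⁻¹, 2*(n+1 : ℝ)⁻¹, by positivity, by
      have : (0:ℝ) < (n+1 : ℝ)⁻¹ := by positivity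
      linarith⟩ with hΦ
  set ψ : ℕ → ℝ → ℝ := fun n => (Φ n).normed volume ⋆[ContinuousLinearMap.lsmul ℝ ℝ] σ with hψ
  have hψsmooth : ∀ n, ContDiff ℝ (⊤ : ℕ∞) (ψ n) := fun n =>
    HasCompactSupport.contDiff_convolution_left _ ((Φ n).hasCompactSupport_normed (μ := volume))
      ((Φ n).contDiff_normed (μ := volume)) hσ
  have hinteg : ∀ n (z : ℝ), Integrable (fun s => (Φ n).normed volume s * σ (z - s)) := by
    intro n z
    have h1 := HasCompactSupport.convolutionExists_left (ContinuousLinearMap.lsmul ℝ ℝ)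
      ((Φ n).hasCompactSupport_normed (μ := volume)) ((Φ n).continuous_normed (μ := volume)) hσ z
    simpa [ConvolutionExistsAt, ContinuousLinearMap.lsmul_apply, smul_eq_mul] using h1
  have hψdef : ∀ n (z : ℝ), ψ n z = ∫ s, (Φ n).normed volume s * σ (z - s) := by
    intro n z
    rw [hψ]
    simp only [convolution_def, ContinuousLinearMap.lsmul_apply, smul_eq_mul]
  -- relation for mollified functions
  have hψrel : ∀ n (w b : ℝ), ∑ i, c i * ψ n (w * t i - b) = 0 := by
    intro n w b
    have h1 : ∀ i : Fin d, c i * ψ n (w * t i - b)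
        = ∫ s, c i * ((Φ n).normed volume s * σ (w * t i - b - s)) := by
      intro i
      rw [hψdef, ← integral_const_mul]
    rw [Finset.sum_congr rfl fun i _ => h1 i, ← integral_finset_sum _
      (fun i _ => ((hinteg n (w * t i - b)).const_mul (c i)))]
    have h2 : ∀ s : ℝ, ∑ i, c i * ((Φ n).normed volume s * σ (w * t i - b - s)) = 0 := by
      intro s
      have h3 := hrel w (b + s)
      calc ∑ i, c i * ((Φ n).normed volume s * σ (w * t i - b - s))
          = (Φ n).normed volume s * ∑ i, σ (w * t i - (b + s)) * c i := by
            rw [Finset.mul_sum]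
            exact Finset.sum_congr rfl fun i _ => by rw [sub_sub]; ring
        _ = 0 := by rw [h3, mul_zero]
    simp only [h2, integral_zero]
  -- each mollification is a polynomial of degree ≤ d - 2
  have hmain : ∀ n : ℕ, ∃ P : Polynomial ℝ, P.natDegree ≤ d - 2 ∧ ∀ x, ψ n x = P.eval x := by
    intro n
    have D00 : ∀ w b : ℝ, ∑ i, c i * (t i ^ 0 * iteratedDeriv 0 (ψ n) (w * t i - b)) = 0 := by
      intro w b; simpa [iteratedDeriv_zero] using hψrel n w b
    have Dkk : ∀ k, ∀ w b : ℝ,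
        ∑ i, c i * (t i ^ k * iteratedDeriv k (ψ n) (w * t i - b)) = 0 := by
      intro k
      induction k with
      | zero => exact D00
      | succ k ih => exact (step_deriv c t (ψ n) (hψsmooth n) k k ih).2
    have Dkj : ∀ k j, ∀ w b : ℝ,
        ∑ i, c i * (t i ^ k * iteratedDeriv (k + j) (ψ n) (w * t i - b)) = 0 := by
      intro k j
      induction j with
      | zero => exact Dkk k
      | succ j ih => exact (step_deriv c t (ψ n) (hψsmooth n) k (k + j) ih).1
    have Dfin : ∀ (k : Fin d) (w b : ℝ),
        ∑ i, c i * (t i ^ (k : ℕ) * iteratedDeriv (d - 1) (ψ n) (w * t i - b)) = 0 := by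
      intro k w b
      have hk : (k : ℕ) + (d - 1 - (k : ℕ)) = d - 1 := by omega
      have := Dkj (k : ℕ) (d - 1 - (k : ℕ)) w b
      rwa [hk] at this
    have hvdm : ∀ (w b : ℝ) (i : Fin d),
        c i * iteratedDeriv (d - 1) (ψ n) (w * t i - b) = 0 := by
      intro w b
      set z : Fin d → ℝ := fun i => c i * iteratedDeriv (d - 1) (ψ n) (w * t i - b) with hz
      have hmul : Matrix.vecMul z (Matrix.vandermonde t) = 0 := by
        funext k
        have h4 := Dfin k w b
        simp only [Matrix.vecMul, Matrix.vandermonde, dotProduct, Matrix.of_apply,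
          Pi.zero_apply, hz]
        rw [← h4]
        exact Finset.sum_congr rfl fun i _ => by ring
      have hdet : IsUnit (Matrix.vandermonde t).det := by
        rw [isUnit_iff_ne_zero, Ne, Matrix.det_vandermonde_eq_zero_iff]
        rintro ⟨i, j, hij, hne⟩
        exact hne (ht hij)
      have hzz : z = 0 := by
        calc z = Matrix.vecMul z (Matrix.vandermonde t * (Matrix.vandermonde t)⁻¹) := by
              rw [Matrix.mul_nonsing_inv _ hdet, Matrix.vecMul_one]
          _ = Matrix.vecMul (Matrix.vecMul z (Matrix.vandermonde t)) (Matrix.vandermonde t)⁻¹ := by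
              rw [Matrix.vecMul_vecMul]
          _ = 0 := by rw [hmul]; simp
      intro i
      exact congrFun hzz i
    have hiter : ∀ x : ℝ, iteratedDeriv (d - 1) (ψ n) x = 0 := by
      intro x
      have h5 := hvdm 0 (-x) i₀
      simp only [zero_mul, zero_sub, neg_neg] at h5
      exact (mul_eq_zero.mp h5).resolve_left hi₀
    obtain ⟨P, hP⟩ := exists_poly_of_iteratedDeriv_zero (d - 1) (ψ n) (hψsmooth n) hiter
    refine ⟨P, ?_, hP⟩
    have hfun : ψ n = fun x => P.eval x := funext hP
    rw [hfun] at hiter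
    rw [poly_iteratedDeriv] at hiter
    have hzero : Polynomial.derivative^[d-1] P = 0 :=
      Polynomial.funext fun x => by simpa using hiter x
    have hd1 : d - 1 = (d - 2) + 1 := by omega
    rw [hd1] at hzero
    exact natDegree_le_of_iterate (d - 2) P hzero
  choose P hPdeg hPeval using hmain
  -- a.e. convergence
  have hconv : ∀ᵐ x : ℝ, Tendsto (fun n => ψ n x) atTop (𝓝 (σ x)) := by
    have hout : Tendsto (fun n => (Φ n).rOut) atTop (𝓝 0) := by
      have h6 : Tendsto (fun n : ℕ => 2 * (n + 1 : ℝ)⁻¹) atTop (𝓝 (2 * 0)) := by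
        apply Tendsto.const_mul
        simpa only [one_div] using tendsto_one_div_add_atTop_nhds_zero_nat (𝕜 := ℝ)
      simpa using h6
    have h'φ : ∀ᶠ n in atTop, (Φ n).rOut ≤ 2 * (Φ n).rIn :=
      Eventually.of_forall fun n => le_refl _
    exact ContDiffBump.ae_convolution_tendsto_right_of_locallyIntegrable hout h'φ hσ
  -- the set of convergence is infinite
  set Sae : Set ℝ := {x | Tendsto (fun n => ψ n x) atTop (𝓝 (σ x))} with hSae
  have hSinf : Sae.Infinite := by
    intro hfin
    have h7 : volume Sae = 0 := hfin.measure_zero volume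
    have h8 : volume Saeᶜ = 0 := hconv
    have h9 := measure_union_le (μ := volume) Sae Saeᶜ
    rw [Set.union_compl_self, h7, h8] at h9
    simp [Real.volume_univ] at h9
  set emb : ℕ ↪ Sae := hSinf.natEmbedding _ with hemb
  set z : Fin (d-1) → ℝ := fun j => (emb (j : ℕ) : ℝ) with hzdef
  have hzinj : Function.Injective z := by
    intro a b hab
    have := emb.injective (Subtype.ext hab)
    exact Fin.ext (by exact_mod_cast congrArg id this) 
  have hzmem : ∀ j, z j ∈ Sae := fun j => (emb (j : ℕ)).2
  -- Lagrange interpolation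
  have hzinjOn : Set.InjOn z (Finset.univ : Finset (Fin (d-1))) :=
    Set.injOn_of_injective hzinj
  have hcard : (Finset.univ : Finset (Fin (d-1))).card = d - 1 := by simp
  have hdeg : ∀ n, (P n).degree < ((Finset.univ : Finset (Fin (d-1))).card : WithBot ℕ) := by
    intro n
    refine lt_of_le_of_lt (Polynomial.degree_le_natDegree) ?_
    rw [hcard]
    exact_mod_cast lt_of_le_of_lt (hPdeg n) (by omega : d - 2 < d - 1)
  have hPinterp : ∀ n, P n = Lagrange.interpolate Finset.univ z (fun j => (P n).eval (z j)) :=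
    fun n => (Lagrange.eq_interpolate hzinjOn (hdeg n))
  set Pinf := Lagrange.interpolate Finset.univ z (fun j => σ (z j)) with hPinf
  have heval : ∀ (x : ℝ) (r : Fin (d-1) → ℝ),
      Polynomial.eval x (Lagrange.interpolate Finset.univ z r)
        = ∑ j, r j * Polynomial.eval x (Lagrange.basis Finset.univ z j) := by
    intro x r
    rw [Lagrange.interpolate_apply]
    simp [Polynomial.eval_finset_sum]
  have hkey : ∀ x ∈ Sae, σ x = Pinf.eval x := by
    intro x hxmem
    have hx : Tendsto (fun n => ψ n x) atTop (𝓝 (σ x)) := hxmem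
    have heq : ∀ n, ψ n x
        = ∑ j, ψ n (z j) * Polynomial.eval x (Lagrange.basis Finset.univ z j) := by
      intro n
      rw [hPeval n x]
      conv_lhs => rw [hPinterp n]
      rw [heval]
      exact Finset.sum_congr rfl fun j _ => by rw [hPeval n (z j)]
    have h10 : Tendsto (fun n => ∑ j, ψ n (z j) * Polynomial.eval x (Lagrange.basis Finset.univ z j))
        atTop (𝓝 (∑ j, σ (z j) * Polynomial.eval x (Lagrange.basis Finset.univ z j))) := by
      apply tendsto_finset_sum
      intro j _
      exact Tendsto.mul_const _ (hzmem j)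
    have hto : Tendsto (fun n => ψ n x) atTop (𝓝 (Pinf.eval x)) := by
      rw [hPinf]
      show Tendsto _ _ (𝓝 (Polynomial.eval x _))
      rw [heval]
      exact h10.congr fun n => (heq n).symm
    exact tendsto_nhds_unique hx hto
  have hae : ∀ᵐ x : ℝ, σ x = Pinf.eval x := by
    filter_upwards [hconv] with x hx using hkey x hx
  refine ⟨Pinf, ?_, hae⟩
  by_cases h0 : Pinf = 0
  · simp [h0]
  · have h11 := Lagrange.degree_interpolate_lt (r := fun j => σ (z j)) hzinjOn
    rw [hcard] at h11
    have h12 : Pinf.natDegree < d - 1 := by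
      rw [Polynomial.natDegree_lt_iff_degree_lt h0]
      exact_mod_cast h11
    omega

lemma key_span (d : ℕ) (hd : 2 ≤ d) (σ : ℝ → ℝ) (hσ : LocallyIntegrable σ)
    (hpoly : ¬ ∃ P : Polynomial ℝ, P.natDegree ≤ d - 2 ∧ ∀ᵐ t : ℝ, σ t = P.eval t)
    (t : Fin d → ℝ) (ht : Function.Injective t) :
    Submodule.span ℝ {u : Fin d → ℝ |
      (∃ w b, u = fun i => σ (w * t i - b)) ∨ u = fun _ => 1} = ⊤ := by
  by_contra hne
  set S : Set (Fin d → ℝ) := {u : Fin d → ℝ |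
      (∃ w b, u = fun i => σ (w * t i - b)) ∨ u = fun _ => 1} with hS
  obtain ⟨φ, hφ0, hφmap⟩ :=
    Submodule.exists_dual_map_eq_bot_of_lt_top (lt_top_iff_ne_top.mpr hne) inferInstance
  set c : Fin d → ℝ := fun i => φ (fun j => if i = j then 1 else 0) with hc
  have hφeq : ∀ u : Fin d → ℝ, φ u = ∑ i, u i * c i := by
    intro u
    rw [LinearMap.pi_apply_eq_sum_univ]
    simp [hc, smul_eq_mul]
  have hvanish : ∀ u ∈ Submodule.span ℝ S, φ u = 0 := by
    intro u hu
    have h1 : φ u ∈ Submodule.map φ (Submodule.span ℝ S) := Submodule.mem_map_of_mem hu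
    rw [hφmap] at h1
    simpa using h1
  have hcne : ∃ i, c i ≠ 0 := by
    by_contra hall
    push_neg at hall
    apply hφ0
    apply LinearMap.ext
    intro u
    rw [hφeq]
    simp [hall]
  obtain ⟨i₀, hi₀⟩ := hcne
  have hrel : ∀ w b : ℝ, ∑ i, σ (w * t i - b) * c i = 0 := by
    intro w b
    have h2 := hvanish _ (Submodule.subset_span (Or.inl ⟨w, b, rfl⟩))
    rwa [hφeq] at h2
  exact hpoly (exists_ae_poly d σ hσ hd t ht c i₀ hi₀ hrel)

/-- **Interpolation by shallow networks (Theorem 2.3).**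
If `σ` is locally integrable and not a.e. equal to a polynomial of degree at most `d-2`,
then any data set of `d` points with distinct inputs can be interpolated by a shallow
neural network `f(x) = vᵀ σ(Wx − b) − b'` of any width `h ≥ d`. -/
theorem shallow_interpolation (d p : ℕ) (hd : 2 ≤ d) (σ : ℝ → ℝ)
    (hσ : LocallyIntegrable σ)
    (hpoly : ¬ ∃ P : Polynomial ℝ, P.natDegree ≤ d - 2 ∧ ∀ᵐ t : ℝ, σ t = P.eval t)
    (x : Fin d → Fin p → ℝ) (hx : Function.Injective x) (y : Fin d → ℝ)
    (h : ℕ) (hh : d ≤ h) :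
    ∃ (W : Matrix (Fin h) (Fin p) ℝ) (v b : Fin h → ℝ) (b' : ℝ),
      ∀ i, (∑ j, v j * σ (W.mulVec (x i) j - b j)) - b' = y i := by
  classical
  -- Step A: find a separating direction
  have hsep : ∃ a : Fin p → ℝ, Function.Injective (fun i => ∑ k, a k * x i k) := by
    set L : {q : Fin d × Fin d // q.1 ≠ q.2} → ((Fin p → ℝ) →ₗ[ℝ] ℝ) := fun q =>
      ∑ k, (x q.val.1 k - x q.val.2 k) • LinearMap.proj k with hL
    have hLapp : ∀ q a, L q a = ∑ k, (x q.val.1 k - x q.val.2 k) * a k := by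
      intro q a
      rw [hL]
      simp [LinearMap.sum_apply, LinearMap.smul_apply, LinearMap.proj_apply, smul_eq_mul]
    have hLne : ∀ q, LinearMap.ker (L q) ≠ ⊤ := by
      intro q hker
      have hxq : x q.val.1 ≠ x q.val.2 := fun hh' => q.prop (hx hh')
      obtain ⟨k0, hk0⟩ := Function.ne_iff.mp hxq
      have h1 : L q (Pi.single k0 (1:ℝ)) = x q.val.1 k0 - x q.val.2 k0 := by
        rw [hLapp]
        rw [Finset.sum_eq_single k0]
        · simp
        · intro k _ hk; simp [Pi.single_eq_of_ne hk]
        · simp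
      have h2 : L q = 0 := LinearMap.ker_eq_top.mp hker
      rw [h2] at h1
      simp at h1
      exact hk0 (by linarith)
    have hcov : (⋃ q, ((LinearMap.ker (L q) : Submodule ℝ (Fin p → ℝ)) : Set (Fin p → ℝ)))
        ≠ Set.univ := by
      intro hc
      obtain ⟨q, hq⟩ := Subspace.exists_eq_top_of_iUnion_eq_univ hc
      exact hLne q hq
    obtain ⟨a, ha⟩ := (Set.ne_univ_iff_exists_notMem _).mp hcov
    simp only [Set.mem_iUnion, not_exists, SetLike.mem_coe] at ha
    refine ⟨a, fun i j hij => ?_⟩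
    by_contra hne
    apply ha ⟨(i, j), hne⟩
    rw [LinearMap.mem_ker, hLapp]
    have h4 : ∑ k, a k * x i k = ∑ k, a k * x j k := hij
    have h3 : ∑ k, (x i k - x j k) * a k = (∑ k, a k * x i k) - (∑ k, a k * x j k) := by
      rw [← Finset.sum_sub_distrib]; exact Finset.sum_congr rfl fun k _ => by ring
    rw [h3, h4, sub_self]
  obtain ⟨a, ha⟩ := hsep
  set t : Fin d → ℝ := fun i => ∑ k, a k * x i k with htdef
  set S : Set (Fin d → ℝ) := {u : Fin d → ℝ |
      (∃ w b, u = fun i => σ (w * t i - b)) ∨ u = fun _ => 1} with hSdef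
  have hspan : Submodule.span ℝ S = ⊤ := key_span d hd σ hσ hpoly t ha
  obtain ⟨B, hBS, hBspan, hBindep⟩ := exists_linearIndependent ℝ S
  have hBfin : B.Finite := hBindep.setFinite
  set F : Finset (Fin d → ℝ) := hBfin.toFinset with hFdef
  have hFB : (F : Set (Fin d → ℝ)) = B := hBfin.coe_toFinset
  have hyspan : y ∈ Submodule.span ℝ (F : Set (Fin d → ℝ)) := by
    rw [hFB, hBspan, hspan]; trivial
  obtain ⟨g, -, hg⟩ := Submodule.mem_span_finset.mp hyspan
  have hcard : F.card ≤ d := by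
    have h1 : LinearIndependent ℝ (fun u : {u // u ∈ F} => (u : Fin d → ℝ)) := by
      have h1' := hBindep
      rw [← hFB] at h1'
      exact h1'
    have h2 := LinearIndependent.finset_card_le_finrank h1
    rwa [Module.finrank_fintype_fun_eq_card, Fintype.card_fin] at h2
  set onevec : Fin d → ℝ := fun _ => 1 with honevec
  set F' : Finset (Fin d → ℝ) := F.filter (fun u => u ≠ onevec) with hF'def
  have hF'net : ∀ u : {u // u ∈ F'}, ∃ w b : ℝ, (u : Fin d → ℝ) = fun i => σ (w * t i - b) := by
    rintro ⟨u, hu⟩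
    rcases Finset.mem_filter.mp hu with ⟨huF, hune⟩
    have huS : u ∈ S := hBS (hFB ▸ Finset.mem_coe.mpr huF)
    rcases huS with h5 | h5
    · exact h5
    · exact absurd h5 hune
  choose wf bf hwb using hF'net
  set m : ℕ := F'.card with hmdef
  have hmh : m ≤ h := le_trans (le_trans (Finset.card_filter_le _ _) hcard) hh
  set eqv : {u // u ∈ F'} ≃ Fin m := F'.equivFin with heqv
  set e : {u // u ∈ F'} → Fin h := fun u => Fin.castLE hmh (eqv u) with hedef
  have heinj : Function.Injective e := fun u v huv =>
    eqv.injective (Fin.castLE_injective hmh huv)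
  set nw : Fin h → ℝ := fun j => if hj : (j : ℕ) < m then wf (eqv.symm ⟨(j : ℕ), hj⟩) else 0
    with hnw
  set nb : Fin h → ℝ := fun j => if hj : (j : ℕ) < m then bf (eqv.symm ⟨(j : ℕ), hj⟩) else 0
    with hnb
  set nv : Fin h → ℝ := fun j =>
    if hj : (j : ℕ) < m then g ((eqv.symm ⟨(j : ℕ), hj⟩) : Fin d → ℝ) else 0 with hnv
  set W : Matrix (Fin h) (Fin p) ℝ := Matrix.of (fun j k => nw j * a k) with hW
  refine ⟨W, nv, nb, -(if onevec ∈ F then g onevec else 0), fun i => ?_⟩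
  have hWmul : ∀ j, W.mulVec (x i) j = nw j * t i := by
    intro j
    rw [hW]
    simp only [Matrix.mulVec, dotProduct, Matrix.of_apply, htdef]
    rw [Finset.mul_sum]
    exact Finset.sum_congr rfl fun k _ => by ring
  have he_spec : ∀ u : {u // u ∈ F'},
      nv (e u) = g (u : Fin d → ℝ) ∧ nw (e u) = wf u ∧ nb (e u) = bf u := by
    intro u
    have hlt : ((e u : Fin h) : ℕ) < m := by
      rw [hedef]
      simpa using (eqv u).isLt
    have hcoe : (⟨((e u : Fin h) : ℕ), hlt⟩ : Fin m) = eqv u := by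
      apply Fin.ext
      simp [hedef]
    constructor
    · simp only [hnv]; rw [dif_pos hlt, hcoe, Equiv.symm_apply_apply]
    constructor
    · simp only [hnw]; rw [dif_pos hlt, hcoe, Equiv.symm_apply_apply]
    · simp only [hnb]; rw [dif_pos hlt, hcoe, Equiv.symm_apply_apply]
  have hsum1 : ∑ u ∈ F'.attach, g (u : Fin d → ℝ) * σ (wf u * t i - bf u)
      = ∑ j, nv j * σ (W.mulVec (x i) j - nb j) := by
    apply Finset.sum_of_injOn e (heinj.injOn) (by intro u _; simp)
    · intro j _ hj
      have hjm : ¬ ((j : ℕ) < m) := by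
        intro hlt
        apply hj
        refine ⟨eqv.symm ⟨(j : ℕ), hlt⟩, by simp, ?_⟩
        rw [hedef]
        simp only [Equiv.apply_symm_apply]
        apply Fin.ext
        simp
      have hnvz : nv j = 0 := by simp only [hnv]; rw [dif_neg hjm]
      rw [hnvz, zero_mul]
    · intro u _
      obtain ⟨h6, h7, h8⟩ := he_spec u
      rw [hWmul (e u), h6, h7, h8]
  have hsum2 : ∑ u ∈ F'.attach, g (u : Fin d → ℝ) * σ (wf u * t i - bf u)
      = ∑ u ∈ F', g u * u i := by
    rw [← Finset.sum_attach F' (fun u => g u * u i)]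
    apply Finset.sum_congr rfl
    intro u _
    congr 1
    have := hwb u
    rw [congrFun this i]
  have hy : ∑ u ∈ F, g u * u i = y i := by
    have := congrFun hg i
    simpa [Finset.sum_apply, Pi.smul_apply, smul_eq_mul] using this
  have hsplit : ∑ u ∈ F', g u * u i
      + ∑ u ∈ F.filter (fun u => ¬ u ≠ onevec), g u * u i = ∑ u ∈ F, g u * u i := by
    rw [hF'def]
    exact Finset.sum_filter_add_sum_filter_not F _ _
  have hrest : ∑ u ∈ F.filter (fun u => ¬ u ≠ onevec), g u * u i
      = if onevec ∈ F then g onevec else 0 := by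
    have h9 : F.filter (fun u => ¬ u ≠ onevec) = F.filter (fun u => u = onevec) := by
      apply Finset.filter_congr
      intro u _
      simp
    rw [h9, Finset.filter_eq']
    by_cases hone : onevec ∈ F
    · rw [if_pos hone, if_pos hone, Finset.sum_singleton, honevec]
      simp
    · rw [if_neg hone, if_neg hone, Finset.sum_empty]
  rw [← hsum1, hsum2]
  rw [← hy, ← hsplit, hrest]
  ring
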